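/- arXiv:1601.07281 — 2 statements merged into one kernel-verified Lean document; each statement's English description precedes it below -/
import Mathlib

section
/- Every order α digital (t,n,d)-net over 𝔽₂ is an order 1 digital (⌈t/α⌉, n, d)-net over 𝔽₂. -/
/-- Generating matrices `C_1, ..., C_d ∈ 𝔽₂^{q×n}` form an *order `α` digital
`(t,n,d)`-net over `𝔽₂`*: for every choice, for each `j`, of `ν_j` row indices
`i_{j,ν_j} < ⋯ < i_{j,1}` (encoded by a strictly decreasing `idx j : Fin (ν j) → Fin q`,
1-based row index being `idx j l + 1`) such that
`∑_j ∑_{l < min(ν_j, α)} i_{j,l} ≤ αn − t`, the selected rows are linearly independent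
over `𝔽₂`. -/
def isOrderNet (α t n q d : ℕ) (C : Fin d → Matrix (Fin q) (Fin n) (ZMod 2)) : Prop :=
  ∀ (ν : Fin d → ℕ) (idx : ∀ j : Fin d, Fin (ν j) → Fin q),
    (∀ j, StrictAnti (idx j)) →
    (∑ j, ∑ l : Fin (ν j), if (l : ℕ) < α then (idx j l : ℕ) + 1 else 0) ≤ α * n - t →
    LinearIndependent (ZMod 2) (fun p : (Σ j : Fin d, Fin (ν j)) => C p.1 (idx p.1 p.2))

/-- Every order `α` digital `(t,n,d)`-net over `𝔽₂` is an order `1` digital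
`(⌈t/α⌉, n, d)`-net over `𝔽₂` (here `⌈t/α⌉ = (t + α - 1)/α`). -/
theorem stmt4 (α t n q d : ℕ) (hα : 0 < α) (hq : α * n ≤ q) (ht : t ≤ α * n)
    (C : Fin d → Matrix (Fin q) (Fin n) (ZMod 2)) (h : isOrderNet α t n q d C) :
    isOrderNet 1 ((t + α - 1) / α) n q d C := by
  intro ν idx hanti hsum
  apply h ν idx hanti
  have key : ∀ j, (∑ l : Fin (ν j), if (l : ℕ) < α then (idx j l : ℕ) + 1 else 0)
      ≤ α * (∑ l : Fin (ν j), if (l : ℕ) < 1 then (idx j l : ℕ) + 1 else 0) := by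
    intro j
    rcases Nat.eq_zero_or_pos (ν j) with h0 | h0
    · haveI : IsEmpty (Fin (ν j)) := by rw [h0]; infer_instance
      simp
    · set i0 : Fin q := idx j ⟨0, h0⟩ with hi0
      have hrhs : (∑ l : Fin (ν j), if (l : ℕ) < 1 then (idx j l : ℕ) + 1 else 0)
          = (i0 : ℕ) + 1 := by
        rw [Finset.sum_eq_single (⟨0, h0⟩ : Fin (ν j))]
        · simp [hi0]
        · intro b _ hb
          have : (b : ℕ) ≠ 0 := fun hb0 => hb (Fin.ext hb0)
          simp [this]
        · simp
      rw [hrhs]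
      calc (∑ l : Fin (ν j), if (l : ℕ) < α then (idx j l : ℕ) + 1 else 0)
          ≤ ∑ l : Fin (ν j), if (l : ℕ) < α then (i0 : ℕ) + 1 else 0 := by
            apply Finset.sum_le_sum
            intro l _
            have hle : idx j l ≤ i0 := (hanti j).antitone (by
              show (⟨0, h0⟩ : Fin (ν j)) ≤ l
              exact Fin.mk_le_of_le_val (Nat.zero_le _))
            have hle' : (idx j l : ℕ) ≤ (i0 : ℕ) := hle
            split <;> omega
        _ = ∑ l ∈ Finset.range (ν j), if l < α then (i0 : ℕ) + 1 else 0 := by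
            exact Fin.sum_univ_eq_sum_range (fun l => if l < α then (i0 : ℕ) + 1 else 0) (ν j)
        _ = ∑ l ∈ (Finset.range (ν j)).filter (· < α), ((i0 : ℕ) + 1) := by
            rw [Finset.sum_filter]
        _ ≤ ∑ l ∈ Finset.range α, ((i0 : ℕ) + 1) := by
            apply Finset.sum_le_sum_of_subset
            intro x hx
            simp only [Finset.mem_filter, Finset.mem_range] at hx ⊢
            exact hx.2
        _ = α * ((i0 : ℕ) + 1) := by
            rw [Finset.sum_const, Finset.card_range, smul_eq_mul]
  have htotal : (∑ j, ∑ l : Fin (ν j), if (l : ℕ) < α then (idx j l : ℕ) + 1 else 0)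
      ≤ α * (∑ j, ∑ l : Fin (ν j), if (l : ℕ) < 1 then (idx j l : ℕ) + 1 else 0) := by
    rw [Finset.mul_sum]
    exact Finset.sum_le_sum fun j _ => key j
  have hS := Nat.mul_le_mul_left α hsum
  have htα : t ≤ α * ((t + α - 1) / α) := by
    have hmod := Nat.div_add_mod (t + α - 1) α
    have hlt : (t + α - 1) % α < α := Nat.mod_lt _ hα
    omega
  have htn : ((t + α - 1) / α) ≤ n := by
    have e : (n + 1) * α = α * n + α := by ring
    have hlt : t + α - 1 < (n + 1) * α := by omega
    exact Nat.lt_succ_iff.mp ((Nat.div_lt_iff_lt_mul hα).mpr hlt)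
  have hms : α * (1 * n - ((t + α - 1) / α)) + α * ((t + α - 1) / α) = α * n := by
    rw [← Nat.mul_add]
    congr 1
    omega
  omega
end

section
/- Let N ≥ 2 be an integer with binary expansion N = 2^{n_r} + ... + 2^{n_1}, n_r > ... > n_1 ≥ 0. Let S = (x_k)_{k≥0} be a digital sequence over 𝔽₂ with generating matrices C_1,...,C_d ∈ 𝔽₂^{ℕ×ℕ} satisfying c_{j,k,ℓ} = 0 for all k > 2ℓ. For μ ∈ {1,...,r}, the point set Q_μ = {x_k : 2^{n_1}+...+2^{n_{μ-1}} ≤ k < 2^{n_1}+...+2^{n_μ}} equals a digitally shifted digital net with 2^{n_μ} points whose generating matrices are the upper-left 2n_μ × n_μ submatrices of C_1,...,C_d, shifted by a fixed digital shift depending on μ. -/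
/-- The `i`-th binary digit of `k` as an element of `𝔽₂`. -/
def natDigit (k i : ℕ) : ZMod 2 := if k.testBit i then 1 else 0

/-- The `i`-th entry (0-based) of `C_j k⃗` over `𝔽₂`, where `k⃗` is the (finite) binary
digit vector of `k` and `Cj : ℕ → ℕ → ZMod 2` is an `ℕ×ℕ` matrix (row, column, 0-based). -/
def rowVal (Cj : ℕ → ℕ → ZMod 2) (k i : ℕ) : ZMod 2 :=
  ∑ ℓ ∈ Finset.range (k + 1), Cj i ℓ * natDigit k ℓ

/-- The coordinate of the `k`-th point of the digital sequence generated by `Cj`: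
`x_{j,k} = ∑_{i≥0} y_i 2^{-(i+1)}` where `y = Cj k⃗` over `𝔽₂`. -/
noncomputable def seqCoord (Cj : ℕ → ℕ → ZMod 2) (k : ℕ) : ℝ :=
  ∑' i : ℕ, ((rowVal Cj k i).val : ℝ) * ((1 : ℝ) / 2) ^ (i + 1)

lemma natDigit_eq_zero_of_lt {k : ℕ} {ℓ : ℕ} (h : k < 2 ^ ℓ) : natDigit k ℓ = 0 := by
  simp [natDigit, Nat.testBit_lt_two_pow h]

/-- Extending the summation range beyond the digits of `k` doesn't change the sum. -/
lemma sum_digit_ext (f : ℕ → ZMod 2) (k m n : ℕ) (hk : k < 2 ^ m) (hmn : m ≤ n) :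
    ∑ ℓ ∈ Finset.range n, f ℓ * natDigit k ℓ =
      ∑ ℓ ∈ Finset.range m, f ℓ * natDigit k ℓ := by
  refine (Finset.sum_subset (Finset.range_subset_range.2 hmn) ?_).symm
  intro ℓ _ hℓ
  have hm : m ≤ ℓ := by simpa using hℓ
  have : k < 2 ^ ℓ := lt_of_lt_of_le hk (Nat.pow_le_pow_right (by norm_num) hm)
  simp [natDigit_eq_zero_of_lt this]

/-- Digit additivity: if `2^m ∣ b` and `a < 2^m` then digits of `b + a` split. -/
lemma natDigit_add {b a m : ℕ} (hb : 2 ^ m ∣ b) (ha : a < 2 ^ m) (ℓ : ℕ) :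
    natDigit (b + a) ℓ = natDigit b ℓ + natDigit a ℓ := by
  obtain ⟨q, rfl⟩ := hb
  have h1 : ∀ j, Nat.testBit (2 ^ m * q + a) j =
      if j < m then Nat.testBit a j else Nat.testBit q (j - m) :=
    fun j => Nat.testBit_two_pow_mul_add q ha j
  have h2 : ∀ j, Nat.testBit (2 ^ m * q) j = (decide (j ≥ m) && Nat.testBit q (j - m)) :=
    fun j => Nat.testBit_two_pow_mul
  by_cases hℓ : ℓ < m
  · have : Nat.testBit (2 ^ m * q) ℓ = false := by
      rw [h2]; simp [Nat.not_le_of_lt hℓ]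
    simp [natDigit, h1 ℓ, hℓ, this]
  · have hge : m ≤ ℓ := Nat.le_of_not_lt hℓ
    have haℓ : Nat.testBit a ℓ = false :=
      Nat.testBit_lt_two_pow (lt_of_lt_of_le ha (Nat.pow_le_pow_right (by norm_num) hge))
    have : Nat.testBit (2 ^ m * q) ℓ = Nat.testBit q (ℓ - m) := by
      rw [h2]; simp [hge]
    simp [natDigit, h1 ℓ, hℓ, this, haℓ]

open Classical in
/-- Block decomposition of a digital sequence over `𝔽₂`.  Let `N = 2^{n_0} + ⋯ + 2^{n_{r-1}}`
with `n_0 > n_1 > ⋯ > n_{r-1} ≥ 0` (`nn` strictly decreasing), and let the generating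
matrices `C_j` (0-based entries) satisfy `c_{j,k,ℓ} = 0` for `k > 2ℓ` (1-based), i.e.
`C j k ℓ = 0` whenever `k + 1 > 2(ℓ + 1)`.  Then for each block index `μ`, the point set
`Q_μ = {x_k : ∑_{i<μ} 2^{n_i} ≤ k < ∑_{i≤μ} 2^{n_i}}` is a digitally shifted digital net:
there is a digital shift `σ` (finitely many nonzero entries in each coordinate) such that
for every `a < 2^{n_μ}`, the point `x_{offset + a}` has binary digits
`(A_j a⃗) + σ_j`, where `A_j` is the upper-left `2n_μ × n_μ` submatrix of `C_j`. -/
theorem stmt7 (d r : ℕ) (hr : 0 < r) (nn : Fin r → ℕ) (hanti : StrictAnti nn)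
    (C : Fin d → ℕ → ℕ → ZMod 2)
    (hC : ∀ (j : Fin d) (k ℓ : ℕ), 2 * (ℓ + 1) < k + 1 → C j k ℓ = 0)
    (μ : Fin r) :
    ∃ σ : Fin d → ℕ → ZMod 2,
      (∀ j, ∃ M, ∀ i, M ≤ i → σ j i = 0) ∧
      ∀ a : ℕ, a < 2 ^ nn μ → ∀ j : Fin d,
        seqCoord (C j) ((∑ i ∈ Finset.univ.filter fun i => i < μ, 2 ^ nn i) + a) =
          ∑' i : ℕ,
            ((((if i < 2 * nn μ then
                  ∑ ℓ ∈ Finset.range (nn μ), C j i ℓ * natDigit a ℓ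
                else 0) + σ j i).val : ℝ)) * ((1 : ℝ) / 2) ^ (i + 1) := by
  set m := nn μ with hm
  set b : ℕ := ∑ i ∈ Finset.univ.filter fun i => i < μ, 2 ^ nn i with hb
  have hdvd : 2 ^ m ∣ b := by
    refine Finset.dvd_sum ?_
    intro i hi
    have : μ.val ≠ i.val → m < nn i := by
      intro _
      exact hanti (by
        have := (Finset.mem_filter.1 hi).2
        exact this)
    have hlt : m ≤ nn i := le_of_lt (hanti (Finset.mem_filter.1 hi).2)
    exact pow_dvd_pow 2 hlt
  refine ⟨fun j i => ∑ ℓ ∈ Finset.range (b + 1), C j i ℓ * natDigit b ℓ, ?_, ?_⟩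
  · intro j
    refine ⟨2 * b + 2, fun i hi => ?_⟩
    refine Finset.sum_eq_zero fun ℓ hℓ => ?_
    have hℓb : ℓ ≤ b := Nat.lt_succ_iff.1 (Finset.mem_range.1 hℓ)
    have : 2 * (ℓ + 1) < i + 1 := by omega
    rw [hC j i ℓ this, zero_mul]
  · intro a ha j
    unfold seqCoord
    refine tsum_congr fun i => ?_
    congr 2
    -- key pointwise identity over ZMod 2
    set L := b + a + 1 + (b + 1) + m with hL
    have hba : b + a < 2 ^ (b + a + 1) :=
      lt_of_lt_of_le (Nat.lt_two_pow_self) (Nat.pow_le_pow_right (by norm_num) (by omega))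
    have hbb : b < 2 ^ (b + 1) :=
      lt_of_lt_of_le (Nat.lt_two_pow_self) (Nat.pow_le_pow_right (by norm_num) (by omega))
    have key : rowVal (C j) (b + a) i =
        (∑ ℓ ∈ Finset.range (b + 1), C j i ℓ * natDigit b ℓ) +
        (∑ ℓ ∈ Finset.range m, C j i ℓ * natDigit a ℓ) := by
      rw [rowVal,
        ← sum_digit_ext (C j i) (b + a) (b + a + 1) L hba (by omega)]
      have : ∀ ℓ, natDigit (b + a) ℓ = natDigit b ℓ + natDigit a ℓ :=
        natDigit_add hdvd ha
      simp only [this, mul_add, Finset.sum_add_distrib]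
      rw [sum_digit_ext (C j i) b (b + 1) L hbb (by omega),
        sum_digit_ext (C j i) a m L ha (by omega)]
    rw [key]
    by_cases hi : i < 2 * m
    · simp [hi, add_comm]
    · have : (∑ ℓ ∈ Finset.range m, C j i ℓ * natDigit a ℓ) = 0 := by
        refine Finset.sum_eq_zero fun ℓ hℓ => ?_
        have hℓm : ℓ < m := Finset.mem_range.1 hℓ
        have : 2 * (ℓ + 1) < i + 1 := by omega
        rw [hC j i ℓ this, zero_mul]
      simp [hi, this, add_comm]
end
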